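/- Let G be a transitive closed subgroup of Sym(Ω) with no algebraicity and weak elimination of imaginaries. Then G is topologically simple: every closed normal subgroup of G is trivial or equal to G. -/

import Mathlib

open Topology

/-- The topology of pointwise convergence on the permutation group of a (discrete) set. -/
noncomputable def permTopology (Ω : Type*) : TopologicalSpace (Equiv.Perm Ω) :=
  letI : TopologicalSpace Ω := ⊥
  TopologicalSpace.induced
    (fun g => ((g : Ω → Ω), ((g⁻¹ : Equiv.Perm Ω) : Ω → Ω))) inferInstance

/-- The subgroup of permutations fixing every point of a finite set `A`. -/
def fixSubgroup {Ω : Type*} (A : Finset Ω) : Subgroup (Equiv.Perm Ω) where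
  carrier := {g | ∀ a ∈ A, g a = a}
  one_mem' := by intro a _; simp
  mul_mem' := by
    intro g h hg hh a ha
    simp [Equiv.Perm.mul_apply, hh a ha, hg a ha]
  inv_mem' := by
    intro g hg a ha
    have h1 := hg a ha
    calc (g⁻¹ : Equiv.Perm Ω) a = g⁻¹ (g a) := by rw [h1]
    _ = a := g.symm_apply_apply a

/-- The subgroup of permutations stabilizing a finite set `A` setwise. -/
def setwiseStab {Ω : Type*} (A : Finset Ω) : Subgroup (Equiv.Perm Ω) where
  carrier := {g | ∀ a : Ω, a ∈ A ↔ g a ∈ A}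
  one_mem' := by intro a; simp
  mul_mem' := by
    intro g h hg hh a
    rw [hh a, hg (h a)]
    simp [Equiv.Perm.mul_apply]
  inv_mem' := by
    intro g hg a
    have := hg ((g⁻¹ : Equiv.Perm Ω) a)
    rw [show g ((g⁻¹ : Equiv.Perm Ω) a) = a from g.apply_symm_apply a] at this
    exact this.symm

/-- Agreement sets (cosets of point stabilizers) are open in the permutation topology. -/
private lemma isOpen_agree {Ω : Type*} (A : Finset Ω) (p : Equiv.Perm Ω) :
    IsOpen[permTopology Ω] {q : Equiv.Perm Ω | ∀ a ∈ A, q a = p a} := by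
  letI : TopologicalSpace Ω := ⊥
  haveI : DiscreteTopology Ω := ⟨rfl⟩
  have he : permTopology Ω = TopologicalSpace.induced
      (fun g : Equiv.Perm Ω => ((g : Ω → Ω), ((g⁻¹ : Equiv.Perm Ω) : Ω → Ω))) inferInstance := rfl
  rw [he]
  have hs : {q : Equiv.Perm Ω | ∀ a ∈ A, q a = p a} =
      (fun g : Equiv.Perm Ω => ((g : Ω → Ω), ((g⁻¹ : Equiv.Perm Ω) : Ω → Ω))) ⁻¹'
        ((Set.pi (A : Set Ω) (fun a => {p a})) ×ˢ Set.univ) := by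
    ext q
    simp [Set.mem_pi]
  rw [hs]
  exact isOpen_induced
    ((isOpen_set_pi A.finite_toSet (fun a _ => isOpen_discrete _)).prod isOpen_univ)

/-- A transitive closed permutation group with no algebraicity and weak elimination of
imaginaries is topologically simple: every closed normal subgroup is trivial or everything. -/
theorem topologically_simple_of_noAlg_wei
    (Ω : Type*) [Countable Ω] [Infinite Ω] (G : Subgroup (Equiv.Perm Ω))
    (hGcl : IsClosed[permTopology Ω] (G : Set (Equiv.Perm Ω)))
    (htrans : ∀ a b : Ω, ∃ g ∈ G, g a = b)
    (hnoalg : ∀ (A : Finset Ω) (b : Ω), b ∉ A →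
      {x : Ω | ∃ g ∈ G ⊓ fixSubgroup A, g b = x}.Infinite)
    (hwei : ∀ V : Subgroup (Equiv.Perm Ω), V ≤ G →
      (∃ U : Set (Equiv.Perm Ω), IsOpen[permTopology Ω] U ∧ (V : Set (Equiv.Perm Ω)) = U ∩ G) →
      ∃ A : Finset Ω, G ⊓ fixSubgroup A ≤ V ∧ (G ⊓ fixSubgroup A).relIndex V ≠ 0) :
    ∀ N : Subgroup (Equiv.Perm Ω), N ≤ G →
      (∀ g ∈ G, ∀ n ∈ N, g * n * g⁻¹ ∈ N) →
      IsClosed[permTopology Ω] (N : Set (Equiv.Perm Ω)) →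
      N = ⊥ ∨ N = G := by
  classical
  intro N hNG hNnormal hNclosed
  by_cases hbot : N = ⊥
  · exact Or.inl hbot
  right
  have hconj : ∀ g ∈ G, ∀ n ∈ N, g⁻¹ * n * g ∈ N := by
    intro g hg n hn
    have := hNnormal g⁻¹ (G.inv_mem hg) n hn
    rwa [inv_inv] at this
  -- DENSITY: for every finite A and g ∈ G there is n ∈ N agreeing with g on A
  have density : ∀ (A : Finset Ω), ∀ g ∈ G, ∃ n ∈ N, ∀ a ∈ A, n a = g a := by
    intro A g hgG
    -- the subgroup N · (G ⊓ fixSubgroup A)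
    set H : Subgroup (Equiv.Perm Ω) :=
      { carrier := {q | ∃ n ∈ N, ∃ k ∈ G ⊓ fixSubgroup A, q = n * k}
        one_mem' := ⟨1, N.one_mem, 1, (G ⊓ fixSubgroup A).one_mem, (mul_one 1).symm⟩
        mul_mem' := by
          rintro p q ⟨n1, hn1, k1, hk1, rfl⟩ ⟨n2, hn2, k2, hk2, rfl⟩
          refine ⟨n1 * (k1 * n2 * k1⁻¹), N.mul_mem hn1 (hNnormal k1 hk1.1 n2 hn2),
            k1 * k2, mul_mem hk1 hk2, by group⟩
        inv_mem' := by
          rintro p ⟨n, hn, k, hk, rfl⟩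
          refine ⟨k⁻¹ * n⁻¹ * k, hconj k hk.1 n⁻¹ (N.inv_mem hn), k⁻¹, inv_mem hk, by group⟩ }
      with hHdef
    have hmemH : ∀ q : Equiv.Perm Ω, q ∈ H ↔ ∃ n ∈ N, ∃ k ∈ G ⊓ fixSubgroup A, q = n * k :=
      fun q => Iff.rfl
    have hGAleH : G ⊓ fixSubgroup A ≤ H := by
      intro k hk
      exact (hmemH k).2 ⟨1, N.one_mem, k, hk, (one_mul k).symm⟩
    have hNleH : N ≤ H := by
      intro n hn
      exact (hmemH n).2 ⟨n, hn, 1, (G ⊓ fixSubgroup A).one_mem, (mul_one n).symm⟩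
    have hHleG : H ≤ G := by
      rintro q ⟨n, hn, k, hk, rfl⟩
      exact G.mul_mem (hNG hn) hk.1
    -- H is relatively open in G
    have hHopen : ∃ U : Set (Equiv.Perm Ω), IsOpen[permTopology Ω] U ∧
        (H : Set (Equiv.Perm Ω)) = U ∩ G := by
      letI : TopologicalSpace (Equiv.Perm Ω) := permTopology Ω
      refine ⟨⋃ (p : Equiv.Perm Ω) (_ : p ∈ H), {q : Equiv.Perm Ω | ∀ a ∈ A, q a = p a},
        isOpen_iUnion (fun p => isOpen_iUnion (fun _ => isOpen_agree A p)), ?_⟩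
      ext q
      constructor
      · intro hq
        refine ⟨Set.mem_iUnion.2 ⟨q, Set.mem_iUnion.2 ⟨hq, fun a _ => rfl⟩⟩, hHleG hq⟩
      · rintro ⟨hqU, hqG⟩
        obtain ⟨p, hpmem⟩ := Set.mem_iUnion.1 hqU
        obtain ⟨hpH, hagree⟩ := Set.mem_iUnion.1 hpmem
        have hpG : p ∈ G := hHleG hpH
        have hk : p⁻¹ * q ∈ G ⊓ fixSubgroup A := by
          refine ⟨G.mul_mem (G.inv_mem hpG) hqG, fun a ha => ?_⟩
          show p⁻¹ (q a) = a
          rw [hagree a ha]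
          exact p.symm_apply_apply a
        have hmul : p * (p⁻¹ * q) ∈ H := H.mul_mem hpH (hGAleH hk)
        rwa [mul_inv_cancel_left] at hmul
    obtain ⟨B, hB1, hB2⟩ := hwei H hHleG hHopen
    -- the quotient H ⧸ (G ⊓ fix B) is finite
    haveI hfinQ : Finite (H ⧸ (G ⊓ fixSubgroup B).subgroupOf H) :=
      Nat.finite_of_card_ne_zero hB2
    -- the H-orbit of each point of B is finite
    have horbfin : ∀ x ∈ B, ∃ S : Set Ω, S.Finite ∧
        ∀ h ∈ H, (h : Equiv.Perm Ω) x ∈ S := by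
      intro x hxB
      have hwd : ∀ h1 h2 : H,
          @Setoid.r _ (QuotientGroup.leftRel ((G ⊓ fixSubgroup B).subgroupOf H)) h1 h2 →
          ((h1 : Equiv.Perm Ω)) x = ((h2 : Equiv.Perm Ω)) x := by
        intro h1 h2 hrel
        have hmem : h1⁻¹ * h2 ∈ (G ⊓ fixSubgroup B).subgroupOf H :=
          (QuotientGroup.leftRel_apply).1 hrel
        have hfix : (((h1⁻¹ * h2 : H) : Equiv.Perm Ω)) x = x := hmem.2 x hxB
        have := congrArg (fun y => (h1 : Equiv.Perm Ω) y) hfix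
        simpa [Equiv.Perm.mul_apply] using this.symm
      let F : (H ⧸ (G ⊓ fixSubgroup B).subgroupOf H) → Ω :=
        fun q => Quotient.liftOn' q (fun h => ((h : Equiv.Perm Ω)) x) hwd
      refine ⟨Set.range F, Set.finite_range F, fun h hh => ⟨QuotientGroup.mk (⟨h, hh⟩ : H), rfl⟩⟩
    -- every n ∈ N maps B into B
    have hstab : ∀ n ∈ N, ∀ x ∈ B, n x ∈ B := by
      intro n hn x hxB
      by_contra hnxB
      obtain ⟨S, hSfin, hS⟩ := horbfin x hxB
      have hsub : {z : Ω | ∃ g ∈ G ⊓ fixSubgroup B, g (n x) = z} ⊆ S := by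
        rintro z ⟨g, hg, rfl⟩
        have h2 := hS (g * n) (H.mul_mem (hB1 hg) (hNleH hn))
        rwa [Equiv.Perm.mul_apply] at h2
      exact hnoalg B (n x) hnxB (hSfin.subset hsub)
    -- B must be empty
    have hBempty : B = ∅ := by
      by_contra hBne
      obtain ⟨β, hβ⟩ := Finset.nonempty_of_ne_empty hBne
      obtain ⟨m, hmN, hmne⟩ : ∃ m ∈ N, m ≠ (1 : Equiv.Perm Ω) := by
        by_contra hno
        push_neg at hno
        exact hbot (Subgroup.eq_bot_iff_forall N |>.2 hno)
      obtain ⟨x, hx⟩ : ∃ x : Ω, m x ≠ x := by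
        by_contra hall
        push_neg at hall
        exact hmne (Equiv.ext hall)
      obtain ⟨g₀, hg₀G, hg₀β⟩ := htrans β x
      -- the N-orbit of x lands in g₀ '' B, hence is finite
      have hNorbit : {z : Ω | ∃ m' ∈ N, m' x = z} ⊆ (g₀ : Equiv.Perm Ω) '' (B : Set Ω) := by
        rintro z ⟨m', hm'N, rfl⟩
        have h1 : g₀⁻¹ * m' * g₀ ∈ N := hconj g₀ hg₀G m' hm'N
        have h2 : (g₀⁻¹ * m' * g₀) β ∈ B := hstab _ h1 β hβ
        refine ⟨(g₀⁻¹ * m' * g₀) β, h2, ?_⟩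
        simp [Equiv.Perm.mul_apply, hg₀β]
      have hgx' : ∀ g : Equiv.Perm Ω, g x = x → g⁻¹ x = x := by
        intro g hgx
        conv_lhs => rw [← hgx]
        exact g.symm_apply_apply x
      have hsub2 : {z : Ω | ∃ g ∈ G ⊓ fixSubgroup {x}, g (m x) = z} ⊆
          {z : Ω | ∃ m' ∈ N, m' x = z} := by
        rintro z ⟨g, hg, rfl⟩
        have hgx : g x = x := hg.2 x (Finset.mem_singleton_self x)
        refine ⟨g * m * g⁻¹, hNnormal g hg.1 m hmN, ?_⟩
        simp [Equiv.Perm.mul_apply, hgx' g hgx]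
      have hinfin := hnoalg {x} (m x) (by simpa using hx)
      exact hinfin (((B.finite_toSet.image _).subset hNorbit).subset hsub2)
    -- B = ∅ means G ≤ H, so g factors as n * k with k fixing A pointwise
    subst hBempty
    have hGleH : G ≤ H := by
      intro q hq
      exact hB1 ⟨hq, fun a ha => absurd ha (Finset.notMem_empty a)⟩
    obtain ⟨n, hn, k, hk, hfac⟩ := (hmemH g).1 (hGleH hgG)
    have hn' : n = g * k⁻¹ := by rw [hfac]; group
    refine ⟨n, hn, fun a ha => ?_⟩
    have hk' : (k : Equiv.Perm Ω)⁻¹ a = a := ((G ⊓ fixSubgroup A).inv_mem hk).2 a ha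
    rw [hn']
    show g (k⁻¹ a) = g a
    rw [hk']
  -- N is dense and closed, hence equals G
  refine le_antisymm hNG ?_
  intro g hgG
  by_contra hgN
  letI : TopologicalSpace Ω := ⊥
  haveI : DiscreteTopology Ω := ⟨rfl⟩
  have he : permTopology Ω = TopologicalSpace.induced
      (fun g : Equiv.Perm Ω => ((g : Ω → Ω), ((g⁻¹ : Equiv.Perm Ω) : Ω → Ω))) inferInstance := rfl
  have hcompl : IsOpen[TopologicalSpace.induced
      (fun g : Equiv.Perm Ω => ((g : Ω → Ω), ((g⁻¹ : Equiv.Perm Ω) : Ω → Ω))) inferInstance]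
      ((N : Set (Equiv.Perm Ω))ᶜ) := by
    rw [← he]
    exact hNclosed.isOpen_compl
  obtain ⟨W, hWopen, hWpre⟩ := isOpen_induced_iff.1 hcompl
  have hgW : ((g : Ω → Ω), ((g⁻¹ : Equiv.Perm Ω) : Ω → Ω)) ∈ W := by
    have hgc : g ∈ (N : Set (Equiv.Perm Ω))ᶜ := hgN
    rw [← hWpre] at hgc
    exact hgc
  rw [isOpen_prod_iff] at hWopen
  obtain ⟨W₁, W₂, hW₁, hW₂, hg1, hg2, hsubW⟩ := hWopen _ _ hgW
  obtain ⟨I, u, hIu, hbox⟩ := isOpen_pi_iff.1 hW₁ _ hg1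
  obtain ⟨I', u', hIu', hbox'⟩ := isOpen_pi_iff.1 hW₂ _ hg2
  obtain ⟨n, hnN, hnagree⟩ := density (I ∪ I'.image ⇑g⁻¹) g hgG
  have hn1 : (n : Ω → Ω) ∈ W₁ := by
    apply hbox
    rw [Set.mem_pi]
    intro i hi
    rw [hnagree i (Finset.mem_union_left _ hi)]
    exact (hIu i hi).2
  have hn2 : ((n⁻¹ : Equiv.Perm Ω) : Ω → Ω) ∈ W₂ := by
    apply hbox'
    rw [Set.mem_pi]
    intro i hi
    have ha : (g⁻¹ : Equiv.Perm Ω) i ∈ I ∪ I'.image ⇑g⁻¹ :=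
      Finset.mem_union_right _ (Finset.mem_image_of_mem _ hi)
    have h1 : n ((g⁻¹ : Equiv.Perm Ω) i) = g ((g⁻¹ : Equiv.Perm Ω) i) := hnagree _ ha
    rw [show g ((g⁻¹ : Equiv.Perm Ω) i) = i from g.apply_symm_apply i] at h1
    have h2 : (n⁻¹ : Equiv.Perm Ω) i = (g⁻¹ : Equiv.Perm Ω) i := by
      conv_lhs => rw [← h1]
      exact n.symm_apply_apply _
    rw [h2]
    exact (hIu' i hi).2
  have hnc : n ∈ (N : Set (Equiv.Perm Ω))ᶜ := by
    rw [← hWpre]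
    exact hsubW (Set.mk_mem_prod hn1 hn2)
  exact hnc hnN
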